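/- Let σ, L, n > 0 and define the hard function f(x) = ((L−σ)/4)[(1 − x(1))² + Σ_{i=1}^{n−1}(x(i) − x(i+1))² + (x(n) − q^{n+1})²] + (σ/2)Σ_{i=1}^n x(i)². Then f is σ-strongly convex with respect to the Euclidean norm, and each componentwise Lipschitz constant L_i of ∇f satisfies L_i ≤ L. -/

import Mathlib

section aux

variable {E : Type*} [NormedAddCommGroup E] [NormedSpace ℝ E]

private lemma aux_convexOn_affine_sq (g : E → ℝ)
    (hg : ∀ (a b : ℝ) (x y : E), a + b = 1 → g (a • x + b • y) = a * g x + b * g y) :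
    ConvexOn ℝ Set.univ (fun x => (g x) ^ 2) := by
  refine ⟨convex_univ, fun x _ y _ a b ha hb hab => ?_⟩
  simp only [smul_eq_mul, hg a b x y hab]
  nlinarith [mul_nonneg ha hb, sq_nonneg (g x - g y)]

private lemma aux_convexOn_sum {ι : Type*} (s : Finset ι) (g : ι → E → ℝ)
    (h : ∀ j ∈ s, ConvexOn ℝ Set.univ (g j)) :
    ConvexOn ℝ Set.univ (fun x => ∑ j ∈ s, g j x) := by
  classical
  induction s using Finset.induction_on with
  | empty => simpa using convexOn_const (0 : ℝ) convex_univ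
  | insert _ _ hx ih =>
      simp only [Finset.sum_insert hx]
      exact (h _ (Finset.mem_insert_self _ _)).add
        (ih fun j hj => h j (Finset.mem_insert_of_mem hj))

end aux

theorem stmt_12 {n : ℕ} (σ L q : ℝ) (hσ : 0 < σ) (hσL : σ < L) (hq : q ∈ Set.Ioo (0 : ℝ) 1)
    (f : EuclideanSpace ℝ (Fin (n + 1)) → ℝ)
    (hf : ∀ x, f x = (L - σ) / 4 *
        ((1 - x 0) ^ 2 + (∑ i : Fin n, (x i.castSucc - x i.succ) ^ 2)
          + (x (Fin.last n) - q ^ (n + 2)) ^ 2)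
      + σ / 2 * ∑ i, (x i) ^ 2) :
    StrongConvexOn Set.univ σ f ∧
    ∀ (i : Fin (n + 1)) (x : EuclideanSpace ℝ (Fin (n + 1))) (t : ℝ),
      |fderiv ℝ f (x + t • EuclideanSpace.single i (1 : ℝ)) (EuclideanSpace.single i 1)
        - fderiv ℝ f x (EuclideanSpace.single i 1)| ≤ L * |t| := by
  have hfe : f = fun x => (L - σ) / 4 *
      ((1 - x 0) ^ 2 + (∑ i : Fin n, (x i.castSucc - x i.succ) ^ 2)
        + (x (Fin.last n) - q ^ (n + 2)) ^ 2)
      + σ / 2 * ∑ i, (x i) ^ 2 := funext hf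
  have hnorm : ∀ x : EuclideanSpace ℝ (Fin (n + 1)), ‖x‖ ^ 2 = ∑ j, (x j) ^ 2 := by
    intro x
    rw [PiLp.norm_sq_eq_of_L2]
    simp [Real.norm_eq_abs, sq_abs]
  constructor
  · -- strong convexity
    rw [strongConvexOn_iff_convex]
    have hconv : (fun x : EuclideanSpace ℝ (Fin (n + 1)) => f x - σ / 2 * ‖x‖ ^ 2)
        = fun x => ((L - σ) / 4) •
          ((1 - x 0) ^ 2 + (∑ i : Fin n, (x i.castSucc - x i.succ) ^ 2)
            + (x (Fin.last n) - q ^ (n + 2)) ^ 2) := by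
      funext x
      rw [hf, hnorm]
      simp only [smul_eq_mul]
      ring
    have hAconv : ConvexOn ℝ Set.univ
        (fun x : EuclideanSpace ℝ (Fin (n + 1)) => (1 - x 0) ^ 2) := by
      refine aux_convexOn_affine_sq _ ?_
      intro a b x y hab
      have hb' : b = 1 - a := by linarith
      subst hb'
      simp only [PiLp.add_apply, PiLp.smul_apply, smul_eq_mul]
      ring
    have hBconv : ConvexOn ℝ Set.univ
        (fun x : EuclideanSpace ℝ (Fin (n + 1)) =>
          ∑ j : Fin n, (x j.castSucc - x j.succ) ^ 2) := by
      refine aux_convexOn_sum (Finset.univ : Finset (Fin n))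
        (fun j (x : EuclideanSpace ℝ (Fin (n + 1))) => (x j.castSucc - x j.succ) ^ 2)
        (fun j _ => ?_)
      refine aux_convexOn_affine_sq _ ?_
      intro a b x y hab
      simp only [PiLp.add_apply, PiLp.smul_apply, smul_eq_mul]
      ring
    have hCconv : ConvexOn ℝ Set.univ
        (fun x : EuclideanSpace ℝ (Fin (n + 1)) =>
          (x (Fin.last n) - q ^ (n + 2)) ^ 2) := by
      refine aux_convexOn_affine_sq _ ?_
      intro a b x y hab
      have hb' : b = 1 - a := by linarith
      subst hb'
      simp only [PiLp.add_apply, PiLp.smul_apply, smul_eq_mul]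
      ring
    have hsum := ((hAconv.add hBconv).add hCconv).smul
      (c := (L - σ) / 4) (by linarith)
    rw [hconv]
    exact hsum
  · -- componentwise Lipschitz bound
    intro i x t
    set e : EuclideanSpace ℝ (Fin (n + 1)) := EuclideanSpace.single i (1 : ℝ) with he
    set Ei : Fin (n + 1) → ℝ := fun j => if j = i then 1 else 0 with hEi
    have hE : ∀ j, e j = Ei j := by
      intro j; rw [he, EuclideanSpace.single_apply]
    have hEsq : ∀ j, (Ei j) ^ 2 = Ei j := by
      intro j; by_cases h : j = i <;> simp [hEi, h]
    -- counting lemmas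
    have hcount_cast : ∑ j : Fin n, Ei j.castSucc = if i = Fin.last n then 0 else 1 := by
      rcases Fin.eq_castSucc_or_eq_last i with ⟨k, rfl⟩ | rfl
      · rw [if_neg (Fin.castSucc_lt_last k).ne]
        rw [Finset.sum_eq_single k]
        · simp [hEi]
        · intro j _ hj; simp [hEi, Fin.castSucc_inj, hj]
        · simp
      · rw [if_pos rfl]
        refine Finset.sum_eq_zero fun j _ => ?_
        simp [hEi, (Fin.castSucc_lt_last j).ne]
    have hcount_succ : ∑ j : Fin n, Ei j.succ = if i = 0 then 0 else 1 := by
      rcases Fin.eq_zero_or_eq_succ i with rfl | ⟨k, rfl⟩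
      · rw [if_pos rfl]
        refine Finset.sum_eq_zero fun j _ => ?_
        simp [hEi, Fin.succ_ne_zero]
      · rw [if_neg (Fin.succ_ne_zero k)]
        rw [Finset.sum_eq_single k]
        · simp [hEi]
        · intro j _ hj; simp [hEi, Fin.succ_inj, hj]
        · simp
    have hcross : ∀ j : Fin n, Ei j.castSucc * Ei j.succ = 0 := by
      intro j
      by_cases h : j.castSucc = i
      · have : j.succ ≠ i := by
          rw [← h]; exact fun hc => (Fin.castSucc_lt_succ : j.castSucc < j.succ).ne' hc
        simp [hEi, this]
      · simp [hEi, h]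
    have hQ : (Ei 0) ^ 2 + (∑ j : Fin n, (Ei j.castSucc - Ei j.succ) ^ 2)
        + (Ei (Fin.last n)) ^ 2 = 2 := by
      have hsum : ∑ j : Fin n, (Ei j.castSucc - Ei j.succ) ^ 2
          = ∑ j : Fin n, (Ei j.castSucc + Ei j.succ) := by
        refine Finset.sum_congr rfl fun j _ => ?_
        have h1 := hEsq j.castSucc
        have h2 := hEsq j.succ
        have h3 := hcross j
        ring_nf
        nlinarith [h1, h2, h3]
      rw [hsum, Finset.sum_add_distrib, hcount_cast, hcount_succ, hEsq, hEsq]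
      have h0 : Ei 0 = if i = 0 then 1 else 0 := by simp [hEi, eq_comm]
      have hl : Ei (Fin.last n) = if i = Fin.last n then 1 else 0 := by simp [hEi, eq_comm]
      rw [h0, hl]
      have a1 : (if i = 0 then (1:ℝ) else 0) + (if i = 0 then (0:ℝ) else 1) = 1 := by
        split_ifs <;> ring
      have a2 : (if i = Fin.last n then (1:ℝ) else 0)
          + (if i = Fin.last n then (0:ℝ) else 1) = 1 := by
        split_ifs <;> ring
      linarith [a1, a2]
    have hU : ∑ j, (Ei j) ^ 2 = 1 := by
      simp only [hEsq]
      simp [hEi]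
    -- coordinates of shifted points
    have hyadd : ∀ (y : EuclideanSpace ℝ (Fin (n + 1))) (s : ℝ) (j : Fin (n + 1)),
        (y + s • e) j = y j + s * Ei j := by
      intro y s j
      rw [PiLp.add_apply, PiLp.smul_apply, hE, smul_eq_mul]
    have hyadd1 : ∀ (y : EuclideanSpace ℝ (Fin (n + 1))) (j : Fin (n + 1)),
        (y + e) j = y j + Ei j := by
      intro y j
      rw [PiLp.add_apply, hE]
    -- the key quadratic identity
    have key : ∀ (y : EuclideanSpace ℝ (Fin (n + 1))) (s : ℝ),
        f (y + s • e) = f y + s * (f (y + e) - f y - L / 2) + L / 2 * s ^ 2 := by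
      intro y s
      have hsum1 : ∑ j : Fin n,
          ((y j.castSucc + s * Ei j.castSucc) - (y j.succ + s * Ei j.succ)) ^ 2
          = ∑ j : Fin n, ((y j.castSucc - y j.succ) ^ 2
              + s * (((y j.castSucc + Ei j.castSucc) - (y j.succ + Ei j.succ)) ^ 2
                - (y j.castSucc - y j.succ) ^ 2)
              + (s ^ 2 - s) * (Ei j.castSucc - Ei j.succ) ^ 2) :=
        Finset.sum_congr rfl fun j _ => by ring
      have hsum2 : ∑ j : Fin (n + 1), (y j + s * Ei j) ^ 2
          = ∑ j : Fin (n + 1), ((y j) ^ 2 + s * ((y j + Ei j) ^ 2 - (y j) ^ 2)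
              + (s ^ 2 - s) * (Ei j) ^ 2) :=
        Finset.sum_congr rfl fun j _ => by ring
      rw [hf (y + s • e), hf (y + e), hf y]
      simp only [hyadd, hyadd1]
      rw [hsum1, hsum2]
      simp only [Finset.sum_add_distrib, ← Finset.mul_sum, Finset.sum_sub_distrib]
      linear_combination ((s ^ 2 - s) * ((L - σ) / 4)) * hQ + ((s ^ 2 - s) * (σ / 2)) * hU
    -- differentiability of f
    have hcoord : ∀ j : Fin (n + 1),
        Differentiable ℝ (fun x : EuclideanSpace ℝ (Fin (n + 1)) => x j) := fun j =>
      (EuclideanSpace.proj (𝕜 := ℝ) j).differentiable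
    have hdiff : Differentiable ℝ f := by
      rw [hfe]
      refine Differentiable.add ?_ ?_
      · refine Differentiable.const_mul ?_ _
        refine Differentiable.add (Differentiable.add ?_ ?_) ?_
        · exact ((differentiable_const _).sub (hcoord 0)).pow 2
        · exact Differentiable.fun_sum fun j _ => ((hcoord _).sub (hcoord _)).pow 2
        · exact ((hcoord _).sub (differentiable_const _)).pow 2
      · exact Differentiable.const_mul (Differentiable.fun_sum fun j _ => (hcoord j).pow 2) _
    -- derivative along the line
    set b : ℝ := f (x + e) - f x - L / 2 with hb
    have heq : ∀ t₀ : ℝ, fderiv ℝ f (x + t₀ • e) e = b + L / 2 * (2 * t₀) := by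
      intro t₀
      have hγ : HasDerivAt (fun s : ℝ => x + s • e) e t₀ := by
        simpa using ((hasDerivAt_id t₀).smul_const e).const_add x
      have hcomp : HasDerivAt (fun s : ℝ => f (x + s • e))
          (fderiv ℝ f (x + t₀ • e) e) t₀ :=
        (hdiff (x + t₀ • e)).hasFDerivAt.comp_hasDerivAt t₀ hγ
      have hfun : (fun s : ℝ => f (x + s • e))
          = fun s => f x + s * b + L / 2 * s ^ 2 := funext fun s => key x s
      rw [hfun] at hcomp
      have hpoly : HasDerivAt (fun s : ℝ => f x + s * b + L / 2 * s ^ 2)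
          (b + L / 2 * (2 * t₀)) t₀ := by
        have h1 : HasDerivAt (fun s : ℝ => f x + s * b) b t₀ := by
          simpa using ((hasDerivAt_id t₀).mul_const b).const_add (f x)
        have h2 : HasDerivAt (fun s : ℝ => L / 2 * s ^ 2) (L / 2 * (2 * t₀)) t₀ := by
          simpa using (hasDerivAt_pow 2 t₀).const_mul (L / 2)
        exact h1.add h2
      exact hcomp.unique hpoly
    have h0 : fderiv ℝ f x e = b := by
      have := heq 0
      simpa using this
    have ht := heq t
    rw [ht, h0]
    have : b + L / 2 * (2 * t) - b = L * t := by ring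
    rw [this, abs_mul, abs_of_pos (by linarith : (0:ℝ) < L)]
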